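/- arXiv:2507.00609 — 7 statements merged into one kernel-verified Lean document; each statement's English description precedes it below -/
import Mathlib

section
/- Let L/K be a field extension and M ∈ M_n(K) a cyclic matrix with minimal polynomial f. Let g ∈ L[x] be a monic divisor of f of degree n−k, and write f = gh. Let v ∈ K^n be a cyclic vector for M. Then the M-cyclic code C_g = {v g(M)ᵗ P(M)ᵗ : P ∈ L[x]} equals the kernel {c ∈ L^n : c h(M)ᵗ = 0}, and dim_L(C_g) = k. -/
open Polynomial Matrix

/-- For a cyclic matrix `M` with minimal polynomial `f` of degree `n`, cyclic vector
`v ∈ K^n`, and a monic divisor `g` of `f` in `L[x]` of degree `n-k` with `f = g h`,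
the `M`-cyclic code `C_g = {v g(M)ᵗ P(M)ᵗ : P ∈ L[x]}` equals `ker(h(M))` in `L^n`,
and `dim_L C_g = k`. -/
theorem stmt5 {K L : Type*} [Field K] [Field L] [Algebra K L] {n k : ℕ}
    (M : Matrix (Fin n) (Fin n) K) (v : Fin n → K)
    (hv : Submodule.span K (Set.range fun i : Fin n => (M ^ (i : ℕ)).mulVec v) = ⊤)
    (g h : Polynomial L) (hgmonic : g.Monic)
    (hk : k ≤ n) (hdeg : g.natDegree = n - k)
    (hf : (minpoly K M).map (algebraMap K L) = g * h)
    (Cg : Submodule L (Fin n → L))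
    (hCg : (Cg : Set (Fin n → L)) = {c : Fin n → L | ∃ P : Polynomial L,
      c = (Polynomial.aeval (M.map (algebraMap K L)) (g * P)).mulVec
        (fun j => algebraMap K L (v j))}) :
    Cg = LinearMap.ker (Matrix.mulVecLin (Polynomial.aeval (M.map (algebraMap K L)) h)) ∧
    Module.finrank L Cg = k := by
  classical
  set N : Matrix (Fin n) (Fin n) L := M.map (algebraMap K L) with hN
  set w : Fin n → L := fun j => algebraMap K L (v j) with hw
  set f := minpoly K M with hfdef
  set F := f.map (algebraMap K L) with hF
  -- evaluation map
  let μ : Matrix (Fin n) (Fin n) L →ₗ[L] (Fin n → L) :=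
    { toFun := fun A => A.mulVec w
      map_add' := fun A B => Matrix.add_mulVec A B w
      map_smul' := fun c A => Matrix.smul_mulVec c A w }
  let ev : Polynomial L →ₗ[L] (Fin n → L) := μ.comp (Polynomial.aeval N).toLinearMap
  have hev : ∀ P : Polynomial L, ev P = (Polynomial.aeval N P).mulVec w := fun P => rfl
  have hMint : IsIntegral K M := ⟨M.charpoly, M.charpoly_monic, M.aeval_self_charpoly⟩
  have hfmonic : f.Monic := minpoly.monic hMint
  have hFmonic : F.Monic := hfmonic.map _
  have haevalF : Polynomial.aeval N F = 0 := by
    have hNphi : N = (AlgHom.mapMatrix (m := Fin n) (Algebra.ofId K L)) M := rfl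
    rw [hF, Polynomial.aeval_map_algebraMap, hNphi, Polynomial.aeval_algHom_apply,
      hfdef, minpoly.aeval, map_zero]
  -- the candidate basis
  set b : Fin n → (Fin n → L) := fun i => (N ^ (i : ℕ)).mulVec w with hb
  have hTb : ∀ y : Fin n → K, ∀ i : Fin n,
      (fun j => algebraMap K L (((M ^ (i : ℕ)).mulVec v) j)) = b i := by
    intro y i
    funext j
    have hpow : N ^ (i : ℕ) = (M ^ (i : ℕ)).map (algebraMap K L) :=
      (map_pow ((algebraMap K L).mapMatrix) M (i : ℕ)).symm
    rw [hb]
    show algebraMap K L (((M ^ (i : ℕ)).mulVec v) j) = ((N ^ (i : ℕ)).mulVec w) j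
    rw [hpow]
    exact RingHom.map_mulVec (algebraMap K L) (M ^ (i : ℕ)) v j
  have key : ∀ y : Fin n → K,
      (fun j => algebraMap K L (y j)) ∈ Submodule.span L (Set.range b) := by
    intro y
    have hy : y ∈ Submodule.span K (Set.range fun i : Fin n => (M ^ (i : ℕ)).mulVec v) :=
      hv ▸ Submodule.mem_top
    induction hy using Submodule.span_induction with
    | mem x hx =>
      obtain ⟨i, rfl⟩ := hx
      rw [hTb v i]
      exact Submodule.subset_span ⟨i, rfl⟩
    | zero =>
      have hz : (fun j => algebraMap K L ((0 : Fin n → K) j)) = (0 : Fin n → L) := by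
        funext j; simp
      rw [hz]; exact Submodule.zero_mem _
    | add x y hx hy ihx ihy =>
      have : (fun j => algebraMap K L ((x + y) j)) =
          (fun j => algebraMap K L (x j)) + (fun j => algebraMap K L (y j)) := by
        funext j; simp [map_add]
      rw [this]; exact Submodule.add_mem _ ihx ihy
    | smul c x hx ihx =>
      have : (fun j => algebraMap K L ((c • x) j)) =
          (algebraMap K L c) • (fun j => algebraMap K L (x j)) := by
        funext j; simp [Algebra.smul_def]
      rw [this]; exact Submodule.smul_mem _ _ ihx
  have hspan : ⊤ ≤ Submodule.span L (Set.range b) := by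
    rw [← (Pi.basisFun L (Fin n)).span_eq]
    apply Submodule.span_le.mpr
    rintro _ ⟨j, rfl⟩
    have := key (Pi.single j 1)
    have heq : (fun j' => algebraMap K L ((Pi.single j 1 : Fin n → K) j')) =
        Pi.basisFun L (Fin n) j := by
      funext j'
      rcases eq_or_ne j' j with rfl | hne <;>
        simp [Pi.basisFun_apply, Pi.single_apply, *]
    rwa [heq] at this
  have hcard : Fintype.card (Fin n) = Module.finrank L (Fin n → L) := by
    simp [Module.finrank_fin_fun]
  let b' : Module.Basis (Fin n) L (Fin n → L) := basisOfTopLeSpanOfCardEqFinrank b hspan hcard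
  have hb' : ⇑b' = b := coe_basisOfTopLeSpanOfCardEqFinrank b hspan hcard
  have hevX : ∀ i : Fin n, ev (X ^ (i : ℕ)) = b i := by
    intro i
    rw [hev]
    show (Polynomial.aeval N (X ^ (i : ℕ))).mulVec w = _
    rw [map_pow, Polynomial.aeval_X]
  have hevsurj : ∀ c : Fin n → L, ∃ Q : Polynomial L, c = ev Q := by
    intro c
    refine ⟨∑ i : Fin n, (b'.repr c i) • X ^ (i : ℕ), ?_⟩
    rw [map_sum]
    simp_rw [_root_.map_smul, hevX]
    rw [← hb']
    exact (b'.sum_repr c).symm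
  have hevinj : ∀ P : Polynomial L, P.degree < (n : ℕ) → ev P = 0 → P = 0 := by
    intro P hPdeg hP0
    by_contra hP
    have hnd : P.natDegree < n := (Polynomial.natDegree_lt_iff_degree_lt hP).mpr hPdeg
    have hsum : ev P = ∑ i : Fin n, P.coeff i • b i := by
      rw [hev, Polynomial.aeval_eq_sum_range' hnd N, ← Fin.sum_univ_eq_sum_range
        (fun i => P.coeff i • N ^ i)]
      rw [show (∑ i : Fin n, P.coeff i • N ^ (i : ℕ)).mulVec w =
        μ (∑ i : Fin n, P.coeff i • N ^ (i : ℕ)) from rfl, map_sum]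
      simp_rw [_root_.map_smul]
      rfl
    have hli := b'.linearIndependent
    rw [hb'] at hli
    have hco : ∀ i : Fin n, P.coeff i = 0 :=
      Fintype.linearIndependent_iff.mp hli (fun i => P.coeff (i : ℕ)) (by rw [← hsum, hP0])
    apply hP
    rw [← Polynomial.leadingCoeff_eq_zero, Polynomial.leadingCoeff]
    exact hco ⟨P.natDegree, hnd⟩
  have hFn : F.natDegree = n := by
    have h1 : F.natDegree ≤ n := by
      rw [hF, hfmonic.natDegree_map]
      calc f.natDegree ≤ M.charpoly.natDegree :=
            Polynomial.natDegree_le_of_dvd (Matrix.minpoly_dvd_charpoly M)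
              M.charpoly_monic.ne_zero
        _ = n := by rw [Matrix.charpoly_natDegree_eq_dim, Fintype.card_fin]
    rcases lt_or_eq_of_le h1 with hlt | heq
    · exfalso
      apply hFmonic.ne_zero
      apply hevinj F ((Polynomial.natDegree_lt_iff_degree_lt hFmonic.ne_zero).mp hlt)
      rw [hev, haevalF, Matrix.zero_mulVec]
    · exact heq
  have hh0 : h ≠ 0 := by
    rintro rfl
    rw [mul_zero] at hf
    exact hFmonic.ne_zero hf
  have hg0 : g ≠ 0 := hgmonic.ne_zero
  have hhk : h.natDegree = k := by
    have hmul := Polynomial.natDegree_mul hg0 hh0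
    rw [← hf, hFn, hdeg] at hmul
    omega
  have hevmul : ∀ P Q : Polynomial L,
      ev (P * Q) = (Polynomial.aeval N P).mulVec (ev Q) := by
    intro P Q
    rw [hev, hev, _root_.map_mul, Matrix.mulVec_mulVec]
  -- Part 1
  have hker : Cg = LinearMap.ker ((Polynomial.aeval N h).mulVecLin) := by
    apply le_antisymm
    · intro c hc
      have hc' : c ∈ (Cg : Set (Fin n → L)) := hc
      rw [hCg] at hc'
      obtain ⟨P, rfl⟩ := hc'
      rw [LinearMap.mem_ker, Matrix.mulVecLin_apply]
      have e1 : (Polynomial.aeval N (g * P)).mulVec w = ev (g * P) := rfl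
      rw [e1, ← hevmul, show h * (g * P) = F * P by rw [hf]; ring, hevmul, haevalF,
        Matrix.zero_mulVec]
    · intro c hc
      rw [LinearMap.mem_ker, Matrix.mulVecLin_apply] at hc
      obtain ⟨Q, rfl⟩ := hevsurj c
      have hhQ : ev (h * Q) = 0 := by rw [hevmul]; exact hc
      set q := (h * Q) /ₘ F with hq
      set r := (h * Q) %ₘ F with hr
      have hdiv : r + F * q = h * Q := Polynomial.modByMonic_add_div _ F
      have hevr : ev r = 0 := by
        have : ev r = ev (h * Q) - ev (F * q) := by
          rw [← hdiv]; rw [map_add]; ring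
        rw [this, hhQ, hevmul, haevalF, Matrix.zero_mulVec, sub_zero]
      have hrdeg : r.degree < (n : ℕ) := by
        have := Polynomial.degree_modByMonic_lt (h * Q) hFmonic
        rwa [Polynomial.degree_eq_natDegree hFmonic.ne_zero, hFn] at this
      have hr0 : r = 0 := hevinj r hrdeg hevr
      have hQeq : h * Q = h * (g * q) := by
        rw [← hdiv, hr0, zero_add, hf]; ring
      have : Q = g * q := mul_left_cancel₀ hh0 hQeq
      have : ev Q ∈ (Cg : Set (Fin n → L)) := by
        rw [hCg]
        exact ⟨q, by rw [this]; rfl⟩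
      exact this
  -- Part 2
  let ι : (Fin k → L) →ₗ[L] Polynomial L :=
    (Polynomial.degreeLT L k).subtype.comp (Polynomial.degreeLTEquiv L k).symm.toLinearMap
  let φ : (Fin k → L) →ₗ[L] (Fin n → L) := ev.comp ((LinearMap.mulLeft L g).comp ι)
  have hφ : ∀ x, φ x = ev (g * (ι x)) := fun _ => rfl
  have hιdeg : ∀ x, (ι x).degree < (k : ℕ) :=
    fun x => Polynomial.mem_degreeLT.mp ((Polynomial.degreeLTEquiv L k).symm x).2
  have hgPdeg : ∀ P : Polynomial L, P.degree < (k : ℕ) → (g * P).degree < (n : ℕ) := by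
    intro P hP
    rcases eq_or_ne P 0 with rfl | hP0
    · rw [mul_zero, Polynomial.degree_zero]; exact_mod_cast WithBot.bot_lt_coe n
    · have h1 : P.natDegree < k := (Polynomial.natDegree_lt_iff_degree_lt hP0).mpr hP
      have h2 : (g * P).natDegree < n := by
        rw [Polynomial.natDegree_mul hg0 hP0, hdeg]; omega
      exact (Polynomial.natDegree_lt_iff_degree_lt (mul_ne_zero hg0 hP0)).mp h2
  have hφinj : Function.Injective φ := by
    rw [← LinearMap.ker_eq_bot]
    apply (Submodule.eq_bot_iff _).mpr
    intro x hx
    rw [LinearMap.mem_ker, hφ] at hx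
    have hP0 : g * ι x = 0 := hevinj _ (hgPdeg _ (hιdeg x)) hx
    have hι0 : ι x = 0 := by
      rcases mul_eq_zero.mp hP0 with h' | h'
      · exact absurd h' hg0
      · exact h'
    have : (Polynomial.degreeLTEquiv L k).symm x = 0 := Subtype.ext hι0
    have := congrArg (Polynomial.degreeLTEquiv L k) this
    rwa [LinearEquiv.apply_symm_apply, map_zero] at this
  have hrange : LinearMap.range φ = Cg := by
    apply le_antisymm
    · rintro _ ⟨x, rfl⟩
      have : φ x ∈ (Cg : Set (Fin n → L)) := by
        rw [hCg]; exact ⟨ι x, rfl⟩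
      exact this
    · intro c hc
      have hc' : c ∈ (Cg : Set (Fin n → L)) := hc
      rw [hCg] at hc'
      obtain ⟨P, rfl⟩ := hc'
      set q := (g * P) /ₘ F with hq
      set r := (g * P) %ₘ F with hr
      have hdiv : r + F * q = g * P := Polynomial.modByMonic_add_div _ F
      have hevr : ev (g * P) = ev r := by
        have : ev (g * P) = ev r + ev (F * q) := by rw [← map_add, hdiv]
        rw [this, hevmul, haevalF, Matrix.zero_mulVec, add_zero]
      have hrfac : r = g * (P - h * q) := by
        have h1 : r = g * P - F * q := eq_sub_of_add_eq hdiv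
        rw [h1, hf]; ring
      have hP'deg : (P - h * q).degree < (k : ℕ) := by
        rcases eq_or_ne (P - h * q) 0 with h0 | h0
        · rw [h0, Polynomial.degree_zero]; exact_mod_cast WithBot.bot_lt_coe k
        · have hrne : r ≠ 0 := by rw [hrfac]; exact mul_ne_zero hg0 h0
          have hrdeg : r.natDegree < n := by
            have := Polynomial.degree_modByMonic_lt (g * P) hFmonic
            rw [Polynomial.degree_eq_natDegree hFmonic.ne_zero, hFn] at this
            exact (Polynomial.natDegree_lt_iff_degree_lt hrne).mpr this
          have : r.natDegree = g.natDegree + (P - h * q).natDegree := by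
            rw [hrfac, Polynomial.natDegree_mul hg0 h0]
          rw [this, hdeg] at hrdeg
          exact (Polynomial.natDegree_lt_iff_degree_lt h0).mp (by omega)
      refine ⟨(Polynomial.degreeLTEquiv L k) ⟨P - h * q, Polynomial.mem_degreeLT.mpr hP'deg⟩, ?_⟩
      rw [hφ]
      have hιx : ι ((Polynomial.degreeLTEquiv L k) ⟨P - h * q, Polynomial.mem_degreeLT.mpr hP'deg⟩)
          = P - h * q := by
        show ((Polynomial.degreeLTEquiv L k).symm ((Polynomial.degreeLTEquiv L k)
          ⟨P - h * q, _⟩) : Polynomial L) = P - h * q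
        rw [LinearEquiv.symm_apply_apply]
      rw [hιx, ← hrfac, ← hevr]
      rfl
  constructor
  · exact hker
  · rw [← hrange, LinearMap.finrank_range_of_inj hφinj, Module.finrank_fin_fun]
end

section
/- Let L/K be a field extension, and let f = f₁^{m₁}⋯f_s^{m_s} ∈ K[x] with f_i pairwise distinct monic irreducible in K[x]. Let g ∈ L[x] be a monic divisor of f and write g = g₁⋯g_s with g_i | f_i^{m_i} in L[x]. For each i let ℓ_i = 0 if g_i = 1, and otherwise ℓ_i = min{ℓ ∈ [1,m_i] : g_i | f_i^ℓ}. Then g·L[x] ∩ K[x] = (∏_{i=1}^s f_i^{ℓ_i})·K[x]. -/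
open Polynomial Matrix

/-- Let `f = f₁^{m₁}⋯f_s^{m_s} ∈ K[x]` with `fᵢ` pairwise distinct monic irreducible,
`g ∈ L[x]` a monic divisor of `f` written `g = g₁⋯g_s` with `gᵢ ∣ fᵢ^{mᵢ}` in `L[x]`,
and `ℓᵢ = 0` if `gᵢ = 1`, `ℓᵢ = min{ℓ ∈ [1,mᵢ] : gᵢ ∣ fᵢ^ℓ}` otherwise. Then
`g·L[x] ∩ K[x] = (∏ᵢ fᵢ^{ℓᵢ})·K[x]`. -/
theorem stmt6 {K L : Type*} [Field K] [Field L] [Algebra K L] {s : ℕ}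
    (f : Fin s → Polynomial K) (m : Fin s → ℕ)
    (hmonic : ∀ i, (f i).Monic) (hirr : ∀ i, Irreducible (f i))
    (hdist : Function.Injective f) (hm : ∀ i, 1 ≤ m i)
    (g : Polynomial L) (hgmonic : g.Monic)
    (hgdvd : g ∣ (∏ i, f i ^ m i).map (algebraMap K L))
    (gi : Fin s → Polynomial L) (hgimonic : ∀ i, (gi i).Monic)
    (hgprod : g = ∏ i, gi i)
    (hgi : ∀ i, gi i ∣ ((f i).map (algebraMap K L)) ^ m i)
    (ℓ : Fin s → ℕ)
    (hℓ0 : ∀ i, gi i = 1 → ℓ i = 0)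
    (hℓ1 : ∀ i, gi i ≠ 1 →
      1 ≤ ℓ i ∧ ℓ i ≤ m i ∧ gi i ∣ ((f i).map (algebraMap K L)) ^ ℓ i ∧
      ∀ l, 1 ≤ l → gi i ∣ ((f i).map (algebraMap K L)) ^ l → ℓ i ≤ l) :
    ∀ p : Polynomial K,
      g ∣ p.map (algebraMap K L) ↔ (∏ i, f i ^ ℓ i) ∣ p := by
  have hmap : ∀ i, (f i).map (algebraMap K L) ≠ 0 := fun i =>
    (Polynomial.Monic.map (algebraMap K L) (hmonic i)).ne_zero
  -- distinct monic irreducibles are coprime in K[x]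
  have hcop : Pairwise (fun i j => IsCoprime (f i) (f j)) := by
    intro i j hij
    refine (hirr i).coprime_iff_not_dvd.2 fun hdvd => ?_
    have : Associated (f i) (f j) :=
      associated_of_dvd_dvd hdvd ((hirr i).dvd_symm (hirr j) hdvd)
    exact hij (hdist (Polynomial.eq_of_monic_of_associated (hmonic i) (hmonic j) this))
  have hcopL : Pairwise (fun i j =>
      IsCoprime ((f i).map (algebraMap K L)) ((f j).map (algebraMap K L))) := by
    intro i j hij
    exact (hcop hij).map (Polynomial.mapRingHom (algebraMap K L))
  -- gi are pairwise coprime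
  have hgcop : Pairwise (fun i j => IsCoprime (gi i) (gi j)) := by
    intro i j hij
    exact (((hcopL hij).pow.of_isCoprime_of_dvd_left (hgi i)).of_isCoprime_of_dvd_right (hgi j))
  -- gi i divides (map f i) ^ ℓ i
  have hgiℓ : ∀ i, gi i ∣ ((f i).map (algebraMap K L)) ^ ℓ i := by
    intro i
    by_cases h1 : gi i = 1
    · simp [h1]
    · exact (hℓ1 i h1).2.2.1
  intro p
  constructor
  · -- forward direction
    intro hgp
    -- each f i ^ ℓ i divides p
    have key : ∀ i, f i ^ ℓ i ∣ p := by
      intro i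
      by_cases h1 : gi i = 1
      · simp [hℓ0 i h1]
      rcases eq_or_ne p 0 with rfl | hp0
      · exact dvd_zero _
      -- write p = f i ^ n * q with f i ∤ q
      obtain ⟨n, q, hnq, hpq⟩ := WfDvdMonoid.max_power_factor hp0 (hirr i)
      have hgin : gi i ∣ ((f i).map (algebraMap K L)) ^ n := by
        have hdvd : gi i ∣ p.map (algebraMap K L) := by
          refine dvd_trans ?_ hgp
          rw [hgprod]
          exact Finset.dvd_prod_of_mem gi (Finset.mem_univ i)
        rw [hpq, Polynomial.map_mul, Polynomial.map_pow] at hdvd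
        -- gi i is coprime to map q
        have hcq : IsCoprime (gi i) (q.map (algebraMap K L)) :=
          (IsCoprime.pow_left (((hirr i).coprime_iff_not_dvd.2 hnq).map
            (Polynomial.mapRingHom (algebraMap K L)))).of_isCoprime_of_dvd_left (hgi i)
        exact hcq.dvd_of_dvd_mul_right hdvd
      have hn1 : 1 ≤ n := by
        by_contra hn
        push_neg at hn
        interval_cases n
        simp only [pow_zero] at hgin
        exact h1 ((hgimonic i).eq_one_of_isUnit (isUnit_of_dvd_one hgin))
      have hln : ℓ i ≤ n := (hℓ1 i h1).2.2.2 n hn1 hgin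
      rw [hpq]
      exact Dvd.dvd.mul_right (pow_dvd_pow _ hln) q
    -- combine using coprimality
    refine Finset.prod_dvd_of_coprime ?_ (fun i _ => key i)
    intro i _ j _ hij
    exact (hcop hij).pow
  · -- backward direction
    intro hfp
    rw [hgprod]
    refine Finset.prod_dvd_of_coprime ?_ (fun i _ => ?_)
    · intro i _ j _ hij
      exact hgcop hij
    · refine dvd_trans (hgiℓ i) ?_
      have : (f i) ^ ℓ i ∣ p := dvd_trans (Finset.dvd_prod_of_mem (fun j => f j ^ ℓ j) (Finset.mem_univ i)) hfp
      have := Polynomial.map_dvd (algebraMap K L) this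
      rwa [Polynomial.map_pow] at this
end

section
/- Let L/K be a field extension of finite degree and let M ∈ M_n(K) be a cyclic matrix with minimal polynomial f = f₁^{m₁}⋯f_s^{m_s} (f_i pairwise distinct monic irreducible over K). Let g ∈ L[x] be a monic divisor of f, written g = g₁⋯g_s with g_i | f_i^{m_i}, and define ℓ_i = 0 if g_i = 1 and ℓ_i = min{ℓ : g_i | f_i^ℓ} otherwise. Then dim_K(C_g ∩ K^n) = Σ_{i=1}^s (m_i − ℓ_i) deg(f_i), where C_g is the M-cyclic code with generator polynomial g. -/
open Polynomial Matrix

namespace Stmt7Aux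

variable {F : Type*} [Field F] {n : ℕ}

/-- The evaluation map `R ↦ R(M)·v`. -/
noncomputable def phi (M : Matrix (Fin n) (Fin n) F) (v : Fin n → F) :
    F[X] →ₗ[F] (Fin n → F) where
  toFun R := (aeval M R).mulVec v
  map_add' P Q := by simp [Matrix.add_mulVec]
  map_smul' c P := by simp [Matrix.smul_mulVec]

lemma phi_apply (M : Matrix (Fin n) (Fin n) F) (v : Fin n → F) (R : F[X]) :
    phi M v R = (aeval M R).mulVec v := rfl

lemma phi_mul (M : Matrix (Fin n) (Fin n) F) (v : Fin n → F) (P Q : F[X]) :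
    phi M v (P * Q) = (aeval M P).mulVec (phi M v Q) := by
  simp [phi_apply, _root_.map_mul, Matrix.mulVec_mulVec]

lemma range_phi_top (M : Matrix (Fin n) (Fin n) F) (v : Fin n → F)
    (hv : Submodule.span F (Set.range fun i : Fin n => (M ^ (i : ℕ)).mulVec v) = ⊤) :
    LinearMap.range (phi M v) = ⊤ := by
  rw [eq_top_iff, ← hv, Submodule.span_le]
  rintro _ ⟨i, rfl⟩
  exact ⟨X ^ (i : ℕ), by simp [phi_apply, map_pow]⟩

lemma T_inj (M : Matrix (Fin n) (Fin n) F) (v : Fin n → F)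
    (hv : Submodule.span F (Set.range fun i : Fin n => (M ^ (i : ℕ)).mulVec v) = ⊤) :
    Function.Injective
      (Fintype.linearCombination F (fun i : Fin n => (M ^ (i : ℕ)).mulVec v)) := by
  apply LinearMap.injective_iff_surjective.mpr
  rw [← LinearMap.range_eq_top, Fintype.range_linearCombination, hv]

lemma phi_eq_T (M : Matrix (Fin n) (Fin n) F) (v : Fin n → F) (P : F[X])
    (hd : P.natDegree < n) :
    phi M v P =
      Fintype.linearCombination F (fun i : Fin n => (M ^ (i : ℕ)).mulVec v)
        (fun i : Fin n => P.coeff i) := by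
  rw [Fintype.linearCombination_apply]
  conv_lhs => rw [P.as_sum_range' n hd]
  rw [map_sum, Fin.sum_univ_eq_sum_range (fun i => P.coeff i • (M ^ i).mulVec v)]
  refine Finset.sum_congr rfl fun i _ => ?_
  rw [← smul_X_eq_monomial, _root_.map_smul]
  simp [phi_apply, map_pow]

lemma ann (M : Matrix (Fin n) (Fin n) F) (v : Fin n → F)
    (hv : Submodule.span F (Set.range fun i : Fin n => (M ^ (i : ℕ)).mulVec v) = ⊤)
    (f₀ : F[X]) (hf₀m : f₀.Monic) (hd : f₀.natDegree = n)
    (h0 : phi M v f₀ = 0) (P : F[X]) :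
    phi M v P = 0 ↔ f₀ ∣ P := by
  constructor
  · intro hP
    rw [← modByMonic_eq_zero_iff_dvd hf₀m]
    by_contra hr
    have hphir : phi M v (P %ₘ f₀) = 0 := by
      have hsub : P %ₘ f₀ = P - f₀ * (P /ₘ f₀) := by
        rw [eq_sub_iff_add_eq, modByMonic_add_div P f₀]
      rw [hsub, map_sub, hP, mul_comm, phi_mul, h0, Matrix.mulVec_zero, sub_zero]
    have hdlt : (P %ₘ f₀).natDegree < n := by
      rw [← hd]
      exact natDegree_lt_natDegree hr (degree_modByMonic_lt P hf₀m)
    have hc0 : (fun i : Fin n => (P %ₘ f₀).coeff i) = 0 := by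
      apply T_inj M v hv
      rw [← phi_eq_T M v _ hdlt, hphir, map_zero]
    apply hr
    ext k
    rcases lt_or_ge k n with hk | hk
    · simpa using congrFun hc0 ⟨k, hk⟩
    · simp [coeff_eq_zero_of_natDegree_lt (lt_of_lt_of_le hdlt hk)]
  · rintro ⟨Q, rfl⟩
    rw [mul_comm, phi_mul, h0, Matrix.mulVec_zero]

lemma natDegree_minpoly_eq (M : Matrix (Fin n) (Fin n) F) (v : Fin n → F)
    (hv : Submodule.span F (Set.range fun i : Fin n => (M ^ (i : ℕ)).mulVec v) = ⊤) :
    (minpoly F M).natDegree = n := by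
  have hM : IsIntegral F M := IsIntegral.of_finite F M
  refine le_antisymm ?_ ?_
  · have h1 := Polynomial.natDegree_le_of_dvd (M.minpoly_dvd_charpoly)
      (M.charpoly_monic.ne_zero)
    simpa [Matrix.charpoly_natDegree_eq_dim] using h1
  · by_contra hlt
    push_neg at hlt
    have h0 : phi M v (minpoly F M) = 0 := by
      rw [phi_apply, minpoly.aeval, Matrix.zero_mulVec]
    have hc0 : (fun i : Fin n => (minpoly F M).coeff i) = 0 := by
      apply T_inj M v hv
      rw [← phi_eq_T M v _ hlt, h0, map_zero]
    have hcontr := congrFun hc0 ⟨(minpoly F M).natDegree, hlt⟩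
    simp [(minpoly.monic hM).coeff_natDegree] at hcontr

end Stmt7Aux

open Stmt7Aux in
/-- For a cyclic matrix `M` over `K` with minimal polynomial `f = f₁^{m₁}⋯f_s^{m_s}`,
and a monic divisor `g = g₁⋯g_s` of `f` in `L[x]` with `gᵢ ∣ fᵢ^{mᵢ}`, setting
`ℓᵢ = 0` if `gᵢ = 1` and `ℓᵢ = min{ℓ : gᵢ ∣ fᵢ^ℓ}` otherwise, the `K`-dimension of
`C_g ∩ K^n` equals `Σᵢ (mᵢ − ℓᵢ)·deg fᵢ`. -/
theorem stmt7 {K L : Type*} [Field K] [Field L] [Algebra K L] [FiniteDimensional K L]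
    {n s : ℕ}
    (M : Matrix (Fin n) (Fin n) K) (v : Fin n → K)
    (hv : Submodule.span K (Set.range fun i : Fin n => (M ^ (i : ℕ)).mulVec v) = ⊤)
    (f : Fin s → Polynomial K) (m : Fin s → ℕ)
    (hmonic : ∀ i, (f i).Monic) (hirr : ∀ i, Irreducible (f i))
    (hdist : Function.Injective f) (hm : ∀ i, 1 ≤ m i)
    (hmin : minpoly K M = ∏ i, f i ^ m i)
    (g : Polynomial L) (hgmonic : g.Monic)
    (hgdvd : g ∣ (minpoly K M).map (algebraMap K L))
    (gi : Fin s → Polynomial L) (hgimonic : ∀ i, (gi i).Monic)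
    (hgprod : g = ∏ i, gi i)
    (hgi : ∀ i, gi i ∣ ((f i).map (algebraMap K L)) ^ m i)
    (ℓ : Fin s → ℕ)
    (hℓ0 : ∀ i, gi i = 1 → ℓ i = 0)
    (hℓ1 : ∀ i, gi i ≠ 1 →
      1 ≤ ℓ i ∧ ℓ i ≤ m i ∧ gi i ∣ ((f i).map (algebraMap K L)) ^ ℓ i ∧
      ∀ l, 1 ≤ l → gi i ∣ ((f i).map (algebraMap K L)) ^ l → ℓ i ≤ l)
    (Cg : Submodule L (Fin n → L))
    (hCg : (Cg : Set (Fin n → L)) = {c : Fin n → L | ∃ P : Polynomial L,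
      c = (Polynomial.aeval (M.map (algebraMap K L)) (g * P)).mulVec
        (fun j => algebraMap K L (v j))}) :
    Module.finrank K
      ↥(Submodule.restrictScalars K Cg ⊓
        LinearMap.range ((Algebra.linearMap K L).compLeft (Fin n)))
      = ∑ i, (m i - ℓ i) * (f i).natDegree := by
    classical
  set ML : Matrix (Fin n) (Fin n) L := M.map (algebraMap K L) with hML
  set vL : Fin n → L := fun j => algebraMap K L (v j) with hvLdef
  set u : (Fin n → K) →ₗ[K] (Fin n → L) := (Algebra.linearMap K L).compLeft (Fin n) with hudef
  have huapp : ∀ (x : Fin n → K) (j : Fin n), u x j = algebraMap K L (x j) := fun x j => rfl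
  have huinj : Function.Injective u := fun x y hxy =>
    funext fun j => (algebraMap K L).injective (congrFun hxy j)
  -- compatibility of aeval with base change
  have hmapaeval : ∀ R : Polynomial K,
      (Polynomial.aeval ML (R.map (algebraMap K L)))
        = (Polynomial.aeval M R).map (algebraMap K L) := by
    intro R
    rw [Polynomial.aeval_map_algebraMap]
    have h1 : ML = (AlgHom.mapMatrix (Algebra.ofId K L)) M := by
      rw [hML]; rfl
    rw [h1, Polynomial.aeval_algHom_apply]
    rfl
  have hcompat : ∀ R : Polynomial K,
      u (phi M v R) = phi ML vL (R.map (algebraMap K L)) := by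
    intro R
    funext j
    rw [huapp, phi_apply, phi_apply, hmapaeval]
    exact RingHom.map_mulVec (algebraMap K L) _ v j
  -- the base-changed vector is still cyclic
  have hwL : ∀ i : ℕ, u ((M ^ i).mulVec v) = (ML ^ i).mulVec vL := by
    intro i
    funext j
    rw [huapp]
    have hpow : (M ^ i).map (algebraMap K L) = ML ^ i := by
      rw [hML, ← RingHom.mapMatrix_apply, ← RingHom.mapMatrix_apply, map_pow]
    rw [← hpow]
    exact RingHom.map_mulVec (algebraMap K L) _ v j
  have hvLspan : Submodule.span L
      (Set.range fun i : Fin n => (ML ^ (i : ℕ)).mulVec vL) = ⊤ := by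
    rw [eq_top_iff, ← (Pi.basisFun L (Fin n)).span_eq, Submodule.span_le]
    rintro _ ⟨j, rfl⟩
    have hj : (Pi.basisFun L (Fin n)) j = u (Pi.single j 1) := by
      funext k
      simp [huapp, Pi.single_apply, apply_ite (algebraMap K L)]
    rw [hj]
    have hmem : (Pi.single j 1 : Fin n → K) ∈ Submodule.span K
        (Set.range fun i : Fin n => (M ^ (i : ℕ)).mulVec v) := hv ▸ Submodule.mem_top
    refine Submodule.span_induction ?_ ?_ ?_ ?_ hmem
    · rintro _ ⟨i, rfl⟩
      exact (hwL i) ▸ Submodule.subset_span ⟨i, rfl⟩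
    · simpa using Submodule.zero_mem _
    · intro x y _ _ hx hy
      rw [map_add]; exact Submodule.add_mem _ hx hy
    · intro a x _ hx
      have : u (a • x) = (algebraMap K L a) • u x := by
        funext k
        simp [huapp, Algebra.smul_def]
      rw [this]
      exact Submodule.smul_mem _ _ hx
  -- annihilator characterizations
  have hM : IsIntegral K M := IsIntegral.of_finite K M
  have hfKdeg : (minpoly K M).natDegree = n := natDegree_minpoly_eq M v hv
  have hphifK : phi M v (minpoly K M) = 0 := by
    rw [phi_apply, minpoly.aeval, Matrix.zero_mulVec]
  have annK : ∀ P : Polynomial K, phi M v P = 0 ↔ minpoly K M ∣ P :=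
    ann M v hv _ (minpoly.monic hM) hfKdeg hphifK
  have annL : ∀ P : Polynomial L, phi ML vL P = 0 ↔
      (minpoly K M).map (algebraMap K L) ∣ P := by
    refine ann ML vL hvLspan _ ((minpoly.monic hM).map _) ?_ ?_
    · rw [natDegree_map, hfKdeg]
    · rw [← hcompat, hphifK, map_zero]
  -- arithmetic setup
  have hℓm : ∀ i, ℓ i ≤ m i := by
    intro i
    by_cases hgione : gi i = 1
    · rw [hℓ0 i hgione]; exact Nat.zero_le _
    · exact (hℓ1 i hgione).2.1
  set h : Polynomial K := ∏ i, f i ^ ℓ i with hhdef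
  set f' : Polynomial K := ∏ i, f i ^ (m i - ℓ i) with hf'def
  have hhm : h.Monic := monic_prod_of_monic _ _ fun i _ => (hmonic i).pow _
  have hf'm : f'.Monic := monic_prod_of_monic _ _ fun i _ => (hmonic i).pow _
  have hsplit : minpoly K M = h * f' := by
    rw [hmin, hhdef, hf'def, ← Finset.prod_mul_distrib]
    refine Finset.prod_congr rfl fun i _ => ?_
    rw [← pow_add, Nat.add_sub_cancel' (hℓm i)]
  have hdeg' : f'.natDegree = ∑ i, (m i - ℓ i) * (f i).natDegree := by
    rw [hf'def, natDegree_prod _ _ fun i _ => ((hmonic i).pow _).ne_zero]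
    exact Finset.sum_congr rfl fun i _ => by rw [natDegree_pow]
  -- pairwise coprimality
  have hcop : ∀ i j : Fin s, i ≠ j → IsCoprime (f i) (f j) := by
    intro i j hij
    refine (hirr i).coprime_iff_not_dvd.mpr fun hdvd => ?_
    exact hij (hdist (eq_of_monic_of_associated (hmonic i) (hmonic j)
      ((hirr i).associated_of_dvd (hirr j) hdvd)))
  -- g divides h.map
  have hghL : g ∣ h.map (algebraMap K L) := by
    rw [hgprod, hhdef, Polynomial.map_prod]
    refine Finset.prod_dvd_prod_of_dvd _ _ fun i _ => ?_
    rw [Polynomial.map_pow]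
    by_cases hgione : gi i = 1
    · rw [hgione]; exact one_dvd _
    · exact (hℓ1 i hgione).2.2.1
  -- key: rational polynomials divisible by g over L are divisible by h over K
  have hkey : ∀ R : Polynomial K, g ∣ R.map (algebraMap K L) → h ∣ R := by
    intro R hgR
    by_cases hR : R = 0
    · rw [hR]; exact dvd_zero h
    rw [hhdef]
    refine Finset.prod_dvd_of_coprime
      (fun i _ j _ hij => IsCoprime.pow (hcop i j hij)) fun i _ => ?_
    by_cases hgione : gi i = 1
    · rw [hℓ0 i hgione, pow_zero]; exact one_dvd _
    obtain ⟨h1, h2, h3, h4⟩ := hℓ1 i hgione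
    have hfi1 : 1 ≤ (f i).natDegree := (hirr i).natDegree_pos
    have hfin : ∃ k, ¬ f i ^ (k + 1) ∣ R := by
      refine ⟨R.natDegree, fun hdvd => ?_⟩
      have hle := Polynomial.natDegree_le_of_dvd hdvd hR
      rw [natDegree_pow] at hle
      nlinarith
    set e := Nat.find hfin with hedef
    have he1 : ¬ f i ^ (e + 1) ∣ R := Nat.find_spec hfin
    have he2 : f i ^ e ∣ R := by
      rcases Nat.eq_zero_or_pos e with h0 | hpos
      · rw [h0, pow_zero]; exact one_dvd _
      · have hmin' := Nat.find_min hfin (Nat.sub_lt hpos Nat.one_pos)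
        rw [not_not] at hmin'
        rwa [Nat.sub_add_cancel hpos] at hmin'
    obtain ⟨S, hS⟩ := he2
    have hfS : ¬ f i ∣ S := by
      intro hdvd
      apply he1
      rw [pow_succ, hS]
      exact mul_dvd_mul_left _ hdvd
    have hcopS : IsCoprime (f i) S := (hirr i).coprime_iff_not_dvd.mpr hfS
    have hcopSL : IsCoprime (((f i).map (algebraMap K L)) ^ m i)
        (S.map (algebraMap K L)) := by
      have := hcopS.map (Polynomial.mapRingHom (algebraMap K L))
      simp only [Polynomial.coe_mapRingHom] at this
      exact this.pow_left
    have hgiS : IsCoprime (gi i) (S.map (algebraMap K L)) :=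
      hcopSL.of_isCoprime_of_dvd_left (hgi i)
    have hgiR : gi i ∣ R.map (algebraMap K L) :=
      dvd_trans (by rw [hgprod]; exact Finset.dvd_prod_of_mem gi (Finset.mem_univ i)) hgR
    have hgie : gi i ∣ ((f i).map (algebraMap K L)) ^ e := by
      apply hgiS.dvd_of_dvd_mul_right
      rw [← Polynomial.map_pow, ← Polynomial.map_mul, ← hS]
      exact hgiR
    have hepos : 1 ≤ e := by
      rcases Nat.eq_zero_or_pos e with h0 | hpos
      · exfalso
        apply hgione
        apply (hgimonic i).eq_one_of_isUnit
        apply isUnit_of_dvd_one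
        rwa [h0, pow_zero] at hgie
      · exact hpos
    exact dvd_trans (pow_dvd_pow (f i) (h4 e hepos hgie)) ⟨S, hS⟩
  -- the K-rational code
  set ψ : Polynomial K →ₗ[K] (Fin n → K) := (phi M v) ∘ₗ (LinearMap.mulLeft K h) with hψdef
  have hψapp : ∀ Q, ψ Q = phi M v (h * Q) := fun Q => rfl
  set C : Submodule K (Fin n → K) := LinearMap.range ψ with hCdef
  have hNC : Submodule.restrictScalars K Cg ⊓ LinearMap.range u = Submodule.map u C := by
    ext x
    simp only [Submodule.mem_inf, LinearMap.mem_range, Submodule.mem_map,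
      Submodule.restrictScalars_mem, hCdef]
    constructor
    · rintro ⟨hxC, y, rfl⟩
      obtain ⟨R, hR⟩ : ∃ R, phi M v R = y := by
        have hy : y ∈ LinearMap.range (phi M v) := by
          rw [range_phi_top M v hv]; trivial
        exact hy
      have hxset : u y ∈ (Cg : Set (Fin n → L)) := hxC
      rw [hCg] at hxset
      obtain ⟨P, hP⟩ := hxset
      have hdiff : phi ML vL (R.map (algebraMap K L) - g * P) = 0 := by
        rw [map_sub, ← hcompat, hR]
        have hgp : phi ML vL (g * P) = u y := by rw [phi_apply, hP]
        rw [hgp, sub_self]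
      have hgR : g ∣ R.map (algebraMap K L) := by
        have hd1 : g ∣ R.map (algebraMap K L) - g * P :=
          dvd_trans hgdvd ((annL _).mp hdiff)
        have := dvd_add hd1 (Dvd.intro P rfl)
        simpa using this
      obtain ⟨Q, hQ⟩ := hkey R hgR
      exact ⟨y, ⟨Q, by rw [hψapp, ← hQ, hR]⟩, rfl⟩
    · rintro ⟨y, ⟨Q, rfl⟩, rfl⟩
      refine ⟨?_, ⟨ψ Q, rfl⟩⟩
      show u (ψ Q) ∈ Cg
      have hset : u (ψ Q) ∈ (Cg : Set (Fin n → L)) := by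
        rw [hCg]
        obtain ⟨w, hw⟩ := hghL
        refine ⟨w * Q.map (algebraMap K L), ?_⟩
        rw [hψapp, hcompat, Polynomial.map_mul, hw, phi_apply, mul_assoc]
      exact hset
  rw [hNC, ← (Submodule.equivMapOfInjective u huinj C).finrank_eq]
  -- compute the dimension of C
  set d := f'.natDegree with hddef
  set ψd : (degreeLT K d) →ₗ[K] (Fin n → K) := ψ ∘ₗ (Submodule.subtype _) with hψddef
  have hf'degW : f'.degree = (d : WithBot ℕ) := degree_eq_natDegree hf'm.ne_zero
  have hrange : LinearMap.range ψd = C := by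
    apply le_antisymm
    · rintro _ ⟨Q, rfl⟩
      exact ⟨Q.1, rfl⟩
    · rintro _ ⟨Q, rfl⟩
      have hmem : Q %ₘ f' ∈ degreeLT K d := by
        rw [mem_degreeLT, ← hf'degW]
        exact degree_modByMonic_lt Q hf'm
      refine ⟨⟨Q %ₘ f', hmem⟩, ?_⟩
      show ψ (Q %ₘ f') = ψ Q
      have hz : ψ Q - ψ (Q %ₘ f') = 0 := by
        rw [hψapp, hψapp, ← map_sub, ← mul_sub]
        have hsub : Q - Q %ₘ f' = f' * (Q /ₘ f') := by
          rw [eq_comm, eq_sub_iff_add_eq, add_comm, modByMonic_add_div Q f']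
        rw [hsub, ← mul_assoc, ← hsplit]
        exact (annK _).mpr (Dvd.intro _ rfl)
      exact (sub_eq_zero.mp hz).symm
  have hinj : Function.Injective ψd := by
    rw [← LinearMap.ker_eq_bot]
    ext Q
    simp only [LinearMap.mem_ker, Submodule.mem_bot]
    constructor
    · intro hQ
      have h1 : minpoly K M ∣ h * Q.1 := (annK _).mp hQ
      rw [hsplit] at h1
      have h2 : f' ∣ Q.1 := (mul_dvd_mul_iff_left hhm.ne_zero).mp h1
      have h3 : Q.1 = 0 := by
        by_cases hq0 : Q.1 = 0
        · exact hq0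
        · refine eq_zero_of_dvd_of_natDegree_lt h2 ?_
          have hdlt := mem_degreeLT.mp Q.2
          rw [degree_eq_natDegree hq0] at hdlt
          exact_mod_cast hdlt
      exact Subtype.ext h3
    · rintro rfl
      exact map_zero ψd
  rw [← hrange, ← (LinearEquiv.ofInjective ψd hinj).finrank_eq,
    LinearEquiv.finrank_eq (Polynomial.degreeLTEquiv K d), Module.finrank_fin_fun]
  exact hdeg'
end

section
/- Let L/K be a field extension and M ∈ M_n(K) a cyclic matrix with minimal polynomial f = f₁^{m₁}⋯f_s^{m_s} (f_i pairwise distinct monic irreducible over K). Let g ∈ L[x] be a monic divisor of f, written g = g₁⋯g_s with g_i | f_i^{m_i}. Then the M-cyclic code C_g contains a nonzero vector of K^n if and only if there exists i with g_i | f_i^{m_i − 1}. -/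
open Polynomial Matrix

namespace Stmt8Aux

variable {F : Type*} [Field F] {n : ℕ}

/-- matrix whose `j`-th column is `N^j *ᵥ w` -/
noncomputable def Bmat (N : Matrix (Fin n) (Fin n) F) (w : Fin n → F) :
    Matrix (Fin n) (Fin n) F :=
  Matrix.of fun i j => ((N ^ (j : ℕ)) *ᵥ w) i

lemma Bmat_mulVec (N : Matrix (Fin n) (Fin n) F) (w : Fin n → F) (c : Fin n → F) :
    (Bmat N w) *ᵥ c = ∑ j : Fin n, c j • ((N ^ (j : ℕ)) *ᵥ w) := by
  funext i
  simp [Bmat, Matrix.mulVec, dotProduct, Finset.sum_apply, mul_comm]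

lemma aeval_monomial_mulVec (N : Matrix (Fin n) (Fin n) F) (w : Fin n → F) (k : ℕ) (a : F) :
    (aeval N ((monomial k) a)).mulVec w = a • ((N ^ k) *ᵥ w) := by
  rw [aeval_monomial, Algebra.algebraMap_eq_smul_one, smul_mul_assoc, one_mul,
    Matrix.smul_mulVec]

lemma sum_mulVec' {ι : Type*} (t : Finset ι) (A : ι → Matrix (Fin n) (Fin n) F)
    (w : Fin n → F) : (∑ k ∈ t, A k) *ᵥ w = ∑ k ∈ t, A k *ᵥ w := by
  funext i
  simp only [Matrix.mulVec, dotProduct, Finset.sum_apply, Matrix.sum_apply, Finset.sum_mul]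
  rw [Finset.sum_comm]

lemma repr_aux (N : Matrix (Fin n) (Fin n) F) (w : Fin n → F) (P : F[X])
    (hP : P.natDegree < n) :
    (aeval N P).mulVec w = (Bmat N w) *ᵥ fun j : Fin n => P.coeff (j : ℕ) := by
  conv_lhs => rw [P.as_sum_range' n hP]
  rw [map_sum, sum_mulVec']
  rw [Bmat_mulVec, ← Fin.sum_univ_eq_sum_range
    (fun k => (aeval N ((monomial k) (P.coeff k))) *ᵥ w) n]
  refine Finset.sum_congr rfl fun j _ => ?_
  exact aeval_monomial_mulVec N w j (P.coeff j)

lemma eps_eq_zero_iff (N : Matrix (Fin n) (Fin n) F) (w : Fin n → F)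
    (hB : Function.Injective ((Bmat N w).mulVec))
    (q : F[X]) (hq : q.Monic) (hqn : q.natDegree ≤ n) (hq0 : aeval N q = 0) (P : F[X]) :
    (aeval N P).mulVec w = 0 ↔ q ∣ P := by
  constructor
  · intro h
    have hsplit : P = q * (P /ₘ q) + P %ₘ q := by
      rw [add_comm]; exact (Polynomial.modByMonic_add_div P q).symm
    have hmod : (aeval N (P %ₘ q)).mulVec w = 0 := by
      have : (aeval N P).mulVec w = (aeval N (P %ₘ q)).mulVec w := by
        conv_lhs => rw [hsplit]
        rw [map_add, _root_.map_mul, hq0, zero_mul, zero_add]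
      rw [← this, h]
    by_cases hR : P %ₘ q = 0
    · exact (Polynomial.modByMonic_eq_zero_iff_dvd hq).mp hR
    · exfalso
      have hdeg : (P %ₘ q).natDegree < n := by
        have h1 : (P %ₘ q).degree < q.degree := Polynomial.degree_modByMonic_lt P hq
        have h2 : (P %ₘ q).natDegree < q.natDegree :=
          Polynomial.natDegree_lt_natDegree hR h1
        omega
      rw [repr_aux N w _ hdeg] at hmod
      have h0 : (Bmat N w) *ᵥ (0 : Fin n → F) = 0 := Matrix.mulVec_zero _
      have := hB (hmod.trans h0.symm)
      apply hR
      ext k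
      by_cases hk : k < n
      · simpa using congrFun this ⟨k, hk⟩
      · simp [Polynomial.coeff_eq_zero_of_natDegree_lt (lt_of_lt_of_le hdeg (le_of_not_gt hk))]
  · rintro ⟨t, rfl⟩
    rw [_root_.map_mul, hq0, zero_mul, Matrix.zero_mulVec]

lemma exists_poly (N : Matrix (Fin n) (Fin n) F) (w : Fin n → F)
    (hv : Submodule.span F (Set.range fun i : Fin n => (N ^ (i : ℕ)).mulVec w) = ⊤)
    (y : Fin n → F) : ∃ Q : F[X], (aeval N Q).mulVec w = y := by
  have hy : y ∈ Submodule.span F (Set.range fun i : Fin n => (N ^ (i : ℕ)).mulVec w) := by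
    rw [hv]; trivial
  rw [Submodule.mem_span_range_iff_exists_fun] at hy
  obtain ⟨c, hc⟩ := hy
  refine ⟨∑ j : Fin n, (monomial (j : ℕ)) (c j), ?_⟩
  rw [map_sum, sum_mulVec', ← hc]
  refine Finset.sum_congr rfl fun j _ => ?_
  simpa using aeval_monomial_mulVec N w j (c j)

lemma surj_mulVec (N : Matrix (Fin n) (Fin n) F) (w : Fin n → F)
    (hv : Submodule.span F (Set.range fun i : Fin n => (N ^ (i : ℕ)).mulVec w) = ⊤) :
    Function.Surjective ((Bmat N w).mulVec) := by
  intro y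
  have hy : y ∈ Submodule.span F (Set.range fun i : Fin n => (N ^ (i : ℕ)).mulVec w) := by
    rw [hv]; trivial
  rw [Submodule.mem_span_range_iff_exists_fun] at hy
  obtain ⟨c, hc⟩ := hy
  exact ⟨c, by rw [Bmat_mulVec, hc]⟩

lemma inj_of_det_ne_zero (B : Matrix (Fin n) (Fin n) F) (h : B.det ≠ 0) :
    Function.Injective (B.mulVec) := by
  intro x y hxy
  by_contra hne
  apply h
  rw [← Matrix.exists_mulVec_eq_zero_iff]
  exact ⟨x - y, sub_ne_zero.mpr hne, by rw [Matrix.mulVec_sub, hxy, sub_self]⟩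

lemma det_ne_zero_of_surj (B : Matrix (Fin n) (Fin n) F)
    (h : Function.Surjective (B.mulVec)) : B.det ≠ 0 := by
  intro hdet
  obtain ⟨u, hu0, hu⟩ := (Matrix.exists_mulVec_eq_zero_iff).mpr hdet
  have hsurj : Function.Surjective B.mulVecLin := h
  have hinj : Function.Injective B.mulVecLin :=
    (LinearMap.injective_iff_surjective).mpr hsurj
  exact hu0 (hinj (by simpa using hu))

variable {K L : Type*} [Field K] [Field L] [Algebra K L]

lemma aeval_matrix_map (M : Matrix (Fin n) (Fin n) K) (P : K[X]) :
    aeval (M.map (algebraMap K L)) (P.map (algebraMap K L)) =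
      (aeval M P).map (algebraMap K L) := by
  rw [aeval_map_algebraMap]
  have h := aeval_algHom_apply
    ((Algebra.ofId K L).mapMatrix : Matrix (Fin n) (Fin n) K →ₐ[K] Matrix (Fin n) (Fin n) L) M P
  simpa [AlgHom.mapMatrix_apply, Algebra.ofId] using h

lemma map_mulVec' (A : Matrix (Fin n) (Fin n) K) (w : Fin n → K) :
    (A.map (algebraMap K L)) *ᵥ (fun j => algebraMap K L (w j)) =
      fun i => algebraMap K L ((A *ᵥ w) i) := by
  funext i
  exact (RingHom.map_mulVec (algebraMap K L) A w i).symm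

lemma Bmat_map (M : Matrix (Fin n) (Fin n) K) (w : Fin n → K) :
    Bmat (M.map (algebraMap K L)) (fun j => algebraMap K L (w j)) =
      (Bmat M w).map (algebraMap K L) := by
  ext i j
  have hpow : (M.map (algebraMap K L)) ^ (j : ℕ) = (M ^ (j : ℕ)).map (algebraMap K L) := by
    have := map_pow ((algebraMap K L).mapMatrix) M (j : ℕ)
    simpa [RingHom.mapMatrix_apply] using this.symm
  simp only [Bmat, Matrix.of_apply, Matrix.map_apply, hpow]
  exact (RingHom.map_mulVec (algebraMap K L) (M ^ (j : ℕ)) w i).symm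

end Stmt8Aux

open Stmt8Aux in
/-- The `M`-cyclic code `C_g` contains a nonzero vector of `K^n` if and only if
`gᵢ ∣ fᵢ^{mᵢ−1}` for some `i`. -/
theorem stmt8 {K L : Type*} [Field K] [Field L] [Algebra K L] {n s : ℕ}
    (M : Matrix (Fin n) (Fin n) K) (v : Fin n → K)
    (hv : Submodule.span K (Set.range fun i : Fin n => (M ^ (i : ℕ)).mulVec v) = ⊤)
    (f : Fin s → Polynomial K) (m : Fin s → ℕ)
    (hmonic : ∀ i, (f i).Monic) (hirr : ∀ i, Irreducible (f i))
    (hdist : Function.Injective f) (hm : ∀ i, 1 ≤ m i)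
    (hmin : minpoly K M = ∏ i, f i ^ m i)
    (g : Polynomial L) (hgmonic : g.Monic)
    (hgdvd : g ∣ (minpoly K M).map (algebraMap K L))
    (gi : Fin s → Polynomial L) (hgimonic : ∀ i, (gi i).Monic)
    (hgprod : g = ∏ i, gi i)
    (hgi : ∀ i, gi i ∣ ((f i).map (algebraMap K L)) ^ m i)
    (Cg : Submodule L (Fin n → L))
    (hCg : (Cg : Set (Fin n → L)) = {c : Fin n → L | ∃ P : Polynomial L,
      c = (Polynomial.aeval (M.map (algebraMap K L)) (g * P)).mulVec
        (fun j => algebraMap K L (v j))}) :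
    (∃ c ∈ Cg, c ≠ 0 ∧ ∀ j, c j ∈ Set.range (algebraMap K L)) ↔
      ∃ i, gi i ∣ ((f i).map (algebraMap K L)) ^ (m i - 1) := by
  classical
  have hσ : Function.Injective (algebraMap K L) := (algebraMap K L).injective
  -- notation
  set σ := algebraMap K L with hσdef
  -- basic facts about the minimal polynomial
  have hMint : IsIntegral K M := Matrix.isIntegral M
  have hFmonic : (minpoly K M).Monic := minpoly.monic hMint
  have hFn : (minpoly K M).natDegree ≤ n := by
    have h1 := Polynomial.natDegree_le_of_dvd (Matrix.minpoly_dvd_charpoly M)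
      (Matrix.charpoly_monic M).ne_zero
    simpa [Matrix.charpoly_natDegree_eq_dim] using h1
  -- injectivity data
  have hdet : (Bmat M v).det ≠ 0 :=
    det_ne_zero_of_surj _ (surj_mulVec M v hv)
  have hinjK : Function.Injective ((Bmat M v).mulVec) :=
    inj_of_det_ne_zero _ hdet
  have hinjL : Function.Injective
      ((Bmat (M.map σ) (fun j => σ (v j))).mulVec) := by
    rw [Bmat_map]
    refine inj_of_det_ne_zero _ ?_
    intro h
    apply hdet
    apply hσ
    rw [map_zero, RingHom.map_det]
    exact h
  have hkerK := eps_eq_zero_iff M v hinjK (minpoly K M) hFmonic hFn (minpoly.aeval K M)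
  have hFL0 : aeval (M.map σ) ((minpoly K M).map σ) = 0 := by
    rw [aeval_matrix_map, minpoly.aeval]
    ext i j
    simp
  have hkerL := eps_eq_zero_iff (M.map σ) (fun j => σ (v j)) hinjL
    ((minpoly K M).map σ) (hFmonic.map σ)
    (by rw [hFmonic.natDegree_map]; exact hFn) hFL0
  -- the middle characterization
  have middle : (∃ c ∈ Cg, c ≠ 0 ∧ ∀ j, c j ∈ Set.range σ) ↔
      ∃ Q : Polynomial K, ¬ (minpoly K M) ∣ Q ∧ g ∣ Q.map σ := by
    constructor
    · rintro ⟨c, hcC, hc0, hcK⟩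
      have hcmem : c ∈ (Cg : Set (Fin n → L)) := hcC
      rw [hCg] at hcmem
      obtain ⟨P, hP⟩ := hcmem
      choose w hw using hcK
      obtain ⟨Q, hQ⟩ := exists_poly M v hv w
      have hc : c = fun j => σ (((aeval M Q).mulVec v) j) := by
        funext j; rw [hQ, hw]
      refine ⟨Q, ?_, ?_⟩
      · intro hdvd
        apply hc0
        rw [hc, (hkerK Q).mpr hdvd]
        funext j; simp
      · have h1 : (aeval (M.map σ) (Q.map σ)).mulVec (fun j => σ (v j)) = c := by
          rw [aeval_matrix_map, map_mulVec', ← hc]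
        have h2 : (aeval (M.map σ) (g * P - Q.map σ)).mulVec (fun j => σ (v j)) = 0 := by
          rw [map_sub, Matrix.sub_mulVec, h1, ← hP, sub_self]
        obtain ⟨t, ht⟩ := (hkerL _).mp h2
        have hQL : Q.map σ = g * P - (minpoly K M).map σ * t := by
          rw [← ht]; ring
        rw [hQL]
        exact dvd_sub (Dvd.intro P rfl) (hgdvd.mul_right t)
    · rintro ⟨Q, hFQ, hgQ⟩
      obtain ⟨P, hP⟩ := hgQ
      refine ⟨fun j => σ (((aeval M Q).mulVec v) j), ?_, ?_, fun j => ⟨_, rfl⟩⟩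
      · rw [← SetLike.mem_coe, hCg]
        refine ⟨P, ?_⟩
        rw [← hP, aeval_matrix_map, map_mulVec']
      · intro h0
        apply hFQ
        apply (hkerK Q).mp
        funext j
        apply hσ
        simp only [Pi.zero_apply, map_zero]
        simpa using congrFun h0 j
  rw [middle]
  -- now the purely polynomial statement
  constructor
  · rintro ⟨Q, hFQ, hgQ⟩
    have hQ0 : Q ≠ 0 := fun h => hFQ (h ▸ dvd_zero _)
    -- pairwise coprimality of the f i ^ m i
    have hcop : ∀ j k, j ≠ k → IsCoprime (f j) (f k) := by
      intro j k hjk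
      refine (hirr j).coprime_iff_not_dvd.mpr ?_
      intro hd
      exact hjk (hdist (Polynomial.eq_of_monic_of_associated (hmonic j) (hmonic k)
        ((hirr j).associated_of_dvd (hirr k) hd)))
    have hex : ∃ i, ¬ f i ^ m i ∣ Q := by
      by_contra hall
      push_neg at hall
      apply hFQ
      rw [hmin]
      refine Finset.prod_dvd_of_coprime ?_ (fun i _ => hall i)
      intro j _ k _ hjk
      exact ((hcop j k hjk).pow : IsCoprime (f j ^ m j) (f k ^ m k))
    obtain ⟨i, hi⟩ := hex
    have hexk : ∃ k, ¬ f i ^ k ∣ Q := ⟨m i, hi⟩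
    set N := Nat.find hexk with hN
    have hNs : ¬ f i ^ N ∣ Q := Nat.find_spec hexk
    have hNle : N ≤ m i := Nat.find_min' hexk hi
    have hN0 : N ≠ 0 := by
      intro h
      exact hNs (by rw [h, pow_zero]; exact one_dvd Q)
    set a := N - 1 with ha
    have haN : a < N := Nat.sub_lt (Nat.pos_of_ne_zero hN0) one_pos
    have hQa : f i ^ a ∣ Q := by
      by_contra h
      exact Nat.find_min hexk haN h
    obtain ⟨R, hR⟩ := hQa
    have hfR : ¬ f i ∣ R := by
      intro hd
      apply hNs
      obtain ⟨R', hR'⟩ := hd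
      have : N = a + 1 := by omega
      rw [this, pow_succ, hR, hR']
      ring_nf
      exact Dvd.intro R' (by ring)
    refine ⟨i, ?_⟩
    have hgiQ : gi i ∣ Q.map σ := by
      refine dvd_trans ?_ hgQ
      rw [hgprod]
      exact Finset.dvd_prod_of_mem gi (Finset.mem_univ i)
    have hcopK : IsCoprime ((f i).map σ) (R.map σ) := by
      have := ((hirr i).coprime_iff_not_dvd.mpr hfR).map (Polynomial.mapRingHom σ)
      simpa using this
    have hcopL : IsCoprime ((f i).map σ ^ m i) (R.map σ) := hcopK.pow_left
    have hcopgi : IsCoprime (gi i) (R.map σ) :=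
      IsCoprime.of_isCoprime_of_dvd_left hcopL (hgi i)
    have hdvd2 : gi i ∣ ((f i).map σ) ^ a * R.map σ := by
      rw [← Polynomial.map_pow, ← Polynomial.map_mul, ← hR]
      exact hgiQ
    have h3 : gi i ∣ ((f i).map σ) ^ a := hcopgi.dvd_of_dvd_mul_right hdvd2
    exact h3.trans (pow_dvd_pow _ (by omega))
  · rintro ⟨i, hi⟩
    set e : Fin s → ℕ := fun j => if j = i then m i - 1 else m j with he
    have hdi : 0 < (f i).natDegree := by
      rcases Nat.eq_zero_or_pos (f i).natDegree with h | h
      · exact absurd ((hmonic i).natDegree_eq_zero.mp h)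
          (fun h1 => (hirr i).not_isUnit (h1 ▸ isUnit_one))
      · exact h
    refine ⟨∏ j, f j ^ e j, ?_, ?_⟩
    · intro hdvd
      have hQm : (∏ j, f j ^ e j).Monic :=
        Polynomial.monic_prod_of_monic _ _ fun j _ => (hmonic j).pow _
      have hle := Polynomial.natDegree_le_of_dvd hdvd hQm.ne_zero
      rw [hmin] at hle
      rw [Polynomial.natDegree_prod _ _ (fun j _ => ((hmonic j).pow _).ne_zero),
        Polynomial.natDegree_prod _ _ (fun j _ => ((hmonic j).pow _).ne_zero)] at hle
      simp_rw [Polynomial.natDegree_pow] at hle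
      have hlt : ∑ j, e j * (f j).natDegree < ∑ j, m j * (f j).natDegree := by
        refine Finset.sum_lt_sum (fun j _ => ?_) ⟨i, Finset.mem_univ i, ?_⟩
        · by_cases h : j = i
          · subst h
            simp only [he, if_pos rfl]
            exact Nat.mul_le_mul_right _ (Nat.sub_le _ _)
          · simp [he, h]
        · simp only [he, if_pos rfl]
          exact (Nat.mul_lt_mul_right hdi).mpr (Nat.sub_lt (hm i) one_pos)
      omega
    · rw [Polynomial.map_prod]
      simp_rw [Polynomial.map_pow]
      rw [hgprod]
      refine Finset.prod_dvd_prod_of_dvd _ _ fun j _ => ?_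
      by_cases h : j = i
      · subst h
        simpa [he] using hi
      · simpa [he, h] using hgi j
end

section
/- Let L/K be a field extension and M ∈ M_n(K) a cyclic matrix with minimal polynomial f. If C ⊆ L^n is an M-cyclic code with generator polynomial g, and f = gh, then the dual code C^⊥ = {c' ∈ L^n : ⟨c',c⟩ = 0 for all c ∈ C} is stable under c' ↦ c'M, and is the Mᵗ-cyclic code with generator polynomial h. -/
open Polynomial Matrix

section Aux

variable {K L : Type*} [Field K] [Field L] [Algebra K L] {n : ℕ}

private lemma aevalT (A : Matrix (Fin n) (Fin n) L) (p : Polynomial L) :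
    Polynomial.aeval Aᵀ p = (Polynomial.aeval A p)ᵀ := by
  induction p using Polynomial.induction_on' with
  | add p q hp hq => simp [map_add, hp, hq]
  | monomial k a =>
      simp only [Polynomial.aeval_monomial, Matrix.transpose_mul, Matrix.transpose_pow]
      have : ((algebraMap L (Matrix (Fin n) (Fin n) L)) a)ᵀ
          = (algebraMap L (Matrix (Fin n) (Fin n) L)) a := by
        simp [Matrix.algebraMap_eq_diagonal]
      rw [this, Algebra.commutes]

private lemma span_map_top (N : Matrix (Fin n) (Fin n) K) (u : Fin n → K)
    (hu : Submodule.span K (Set.range fun i : Fin n => (N ^ (i : ℕ)).mulVec u) = ⊤) :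
    Submodule.span L (Set.range fun i : Fin n =>
      ((N.map (algebraMap K L)) ^ (i : ℕ)).mulVec (fun j => algebraMap K L (u j))) = ⊤ := by
  set T : (Fin n → K) →ₗ[K] (Fin n → L) := (Algebra.linearMap K L).compLeft (Fin n) with hT
  have hTs : ∀ i : Fin n, T ((N ^ (i:ℕ)).mulVec u)
      = ((N.map (algebraMap K L)) ^ (i : ℕ)).mulVec (fun j => algebraMap K L (u j)) := by
    intro i
    have : (N.map (algebraMap K L)) ^ (i:ℕ) = (N ^ (i:ℕ)).map (algebraMap K L) := by
      rw [← RingHom.mapMatrix_apply, ← RingHom.mapMatrix_apply, map_pow]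
    rw [this]
    funext j
    simp [hT, LinearMap.compLeft_apply, Matrix.mulVec, dotProduct, Matrix.map_apply, map_sum]
  rw [eq_top_iff, ← (Pi.basisFun L (Fin n)).span_eq, Submodule.span_le]
  rintro x ⟨j, rfl⟩
  have hsingle : Pi.basisFun L (Fin n) j = T (Pi.single j 1) := by
    funext k
    simp [hT, LinearMap.compLeft_apply, Pi.single_apply, apply_ite]
  rw [hsingle]
  have h1 : Pi.single j (1:K) ∈ Submodule.span K
      (Set.range fun i : Fin n => (N ^ (i : ℕ)).mulVec u) := hu ▸ Submodule.mem_top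
  have h2 : T (Pi.single j 1) ∈ Submodule.map T (Submodule.span K
      (Set.range fun i : Fin n => (N ^ (i : ℕ)).mulVec u)) := Submodule.mem_map_of_mem h1
  rw [Submodule.map_span] at h2
  have h3 : (Submodule.span K (T '' Set.range fun i : Fin n => (N ^ (i : ℕ)).mulVec u) :
        Set (Fin n → L))
      ⊆ (Submodule.span L (T '' Set.range fun i : Fin n => (N ^ (i : ℕ)).mulVec u) :
        Set (Fin n → L)) := Submodule.span_subset_span K L _
  have h4 := h3 h2
  rw [SetLike.mem_coe, ← Set.range_comp] at h4
  refine Submodule.span_mono ?_ h4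
  rintro y ⟨i, rfl⟩
  exact ⟨i, (hTs i).symm⟩

/-- Every vector is a polynomial in `A` applied to a cyclic vector. -/
private lemma exists_poly (A : Matrix (Fin n) (Fin n) L) (uL : Fin n → L)
    (hspan : Submodule.span L (Set.range fun i : Fin n => (A ^ (i:ℕ)).mulVec uL) = ⊤)
    (c : Fin n → L) :
    ∃ Q : Polynomial L, c = (Polynomial.aeval A Q).mulVec uL := by
  let T : Polynomial L →ₗ[L] (Fin n → L) :=
    { toFun := fun Q => (Polynomial.aeval A Q).mulVec uL
      map_add' := by intro p q; simp [map_add, Matrix.add_mulVec]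
      map_smul' := by intro c p; simp [Matrix.smul_mulVec] }
  have hle : Submodule.span L (Set.range fun i : Fin n => (A ^ (i:ℕ)).mulVec uL)
      ≤ LinearMap.range T := by
    rw [Submodule.span_le]
    rintro x ⟨i, rfl⟩
    exact ⟨X ^ (i:ℕ), by simp [T, map_pow]⟩
  have : c ∈ LinearMap.range T := hle (hspan ▸ Submodule.mem_top)
  obtain ⟨Q, hQ⟩ := this
  exact ⟨Q, hQ.symm⟩

/-- Orthogonality to a spanning set forces the vector to be zero. -/
private lemma eq_zero_of_dot (u : Fin n → L) (s : Set (Fin n → L))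
    (hs : Submodule.span L s = ⊤) (h : ∀ x ∈ s, x ⬝ᵥ u = 0) : u = 0 := by
  have hall : ∀ x : Fin n → L, x ⬝ᵥ u = 0 := by
    intro x
    have hx : x ∈ Submodule.span L s := hs ▸ Submodule.mem_top
    induction hx using Submodule.span_induction with
    | mem y hy => exact h y hy
    | zero => simp
    | add a b _ _ ha hb => simp [add_dotProduct, ha, hb]
    | smul c a _ ha => simp [smul_dotProduct, ha]
  funext j
  simpa using hall (Pi.single j 1)

/-- Annihilator of a cyclic vector: the minimal polynomial divides. -/
private lemma ann_dvd (A : Matrix (Fin n) (Fin n) L) (uL : Fin n → L)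
    (hspan : Submodule.span L (Set.range fun i : Fin n => (A ^ (i:ℕ)).mulVec uL) = ⊤)
    (f : Polynomial L) (hfm : f.Monic) (hfd : f.natDegree ≤ n)
    (hf0 : Polynomial.aeval A f = 0)
    (P : Polynomial L) (hP : (Polynomial.aeval A P).mulVec uL = 0) : f ∣ P := by
  rw [← Polynomial.modByMonic_eq_zero_iff_dvd hfm]
  set r := P %ₘ f with hr
  have hPr : Polynomial.aeval A P = Polynomial.aeval A r := by
    conv_lhs => rw [← Polynomial.modByMonic_add_div P f]
    rw [map_add, _root_.map_mul, hf0, zero_mul, add_zero]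
  have hr0 : (Polynomial.aeval A r).mulVec uL = 0 := by rw [← hPr]; exact hP
  by_contra hne
  have hdeg : r.natDegree < f.natDegree :=
    Polynomial.natDegree_lt_natDegree hne (Polynomial.degree_modByMonic_lt P hfm)
  have hdegn : r.natDegree < n := lt_of_lt_of_le hdeg hfd
  have hsummv : ∀ (F : Fin n → Matrix (Fin n) (Fin n) L),
      (∑ i : Fin n, F i).mulVec uL = ∑ i : Fin n, (F i).mulVec uL := by
    intro F
    funext j
    simp only [Matrix.mulVec, dotProduct, Matrix.sum_apply, Finset.sum_apply,
      Finset.sum_mul]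
    rw [Finset.sum_comm]
  have haeval : Polynomial.aeval A r = ∑ i : Fin n, r.coeff (i:ℕ) • A ^ (i:ℕ) := by
    rw [Polynomial.aeval_eq_sum_range' (x := A) hdegn,
      ← Fin.sum_univ_eq_sum_range (fun i => r.coeff i • A ^ i) n]
  have hsum : ∑ i : Fin n, r.coeff (i:ℕ) • (A ^ (i:ℕ)).mulVec uL = 0 := by
    calc ∑ i : Fin n, r.coeff (i:ℕ) • (A ^ (i:ℕ)).mulVec uL
        = ∑ i : Fin n, (r.coeff (i:ℕ) • A ^ (i:ℕ)).mulVec uL := by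
          simp [Matrix.smul_mulVec]
      _ = (∑ i : Fin n, r.coeff (i:ℕ) • A ^ (i:ℕ)).mulVec uL := (hsummv _).symm
      _ = (Polynomial.aeval A r).mulVec uL := by rw [haeval]
      _ = 0 := hr0
  have hli : LinearIndependent L (fun i : Fin n => (A ^ (i:ℕ)).mulVec uL) := by
    apply linearIndependent_of_top_le_span_of_card_eq_finrank (le_of_eq hspan.symm)
    simp
  have := Fintype.linearIndependent_iff.mp hli (fun i => r.coeff (i:ℕ)) hsum
    ⟨r.natDegree, hdegn⟩
  exact Polynomial.leadingCoeff_ne_zero.mpr hne this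

/-- The key bilinear identity. -/
private lemma key_dot (A : Matrix (Fin n) (Fin n) L) (wL vL : Fin n → L) (Q p : Polynomial L) :
    ((Polynomial.aeval Aᵀ Q).mulVec wL) ⬝ᵥ ((Polynomial.aeval A p).mulVec vL)
      = wL ⬝ᵥ ((Polynomial.aeval A (Q * p)).mulVec vL) := by
  rw [aevalT, Matrix.mulVec_transpose, ← Matrix.dotProduct_mulVec, Matrix.mulVec_mulVec,
    ← _root_.map_mul]

end Aux

/-- If `C` is the `M`-cyclic code with generator polynomial `g` and `f = g h`, then
the dual code `C^⊥` is stable under `c' ↦ c'M` and is the `Mᵗ`-cyclic code with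
generator polynomial `h`. -/
theorem stmt12 {K L : Type*} [Field K] [Field L] [Algebra K L] {n : ℕ}
    (M : Matrix (Fin n) (Fin n) K) (v : Fin n → K)
    (hv : Submodule.span K (Set.range fun i : Fin n => (M ^ (i : ℕ)).mulVec v) = ⊤)
    (w : Fin n → K)
    (hw : Submodule.span K (Set.range fun i : Fin n => (Mᵀ ^ (i : ℕ)).mulVec w) = ⊤)
    (g h : Polynomial L) (hgmonic : g.Monic)
    (hf : (minpoly K M).map (algebraMap K L) = g * h)
    (S : Set (Fin n → L))
    (hS : S = {c : Fin n → L | ∃ P : Polynomial L,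
      c = (Polynomial.aeval (M.map (algebraMap K L)) (g * P)).mulVec
        (fun j => algebraMap K L (v j))}) :
    (∀ c' : Fin n → L, (∀ c ∈ S, c' ⬝ᵥ c = 0) →
      ∀ c ∈ S, (Matrix.vecMul c' (M.map (algebraMap K L))) ⬝ᵥ c = 0) ∧
    {c' : Fin n → L | ∀ c ∈ S, c' ⬝ᵥ c = 0}
      = {c : Fin n → L | ∃ P : Polynomial L,
          c = (Polynomial.aeval ((M.map (algebraMap K L))ᵀ) (h * P)).mulVec
            (fun j => algebraMap K L (w j))} := by
  set A : Matrix (Fin n) (Fin n) L := M.map (algebraMap K L) with hA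
  set vL : Fin n → L := fun j => algebraMap K L (v j) with hvL
  set wL : Fin n → L := fun j => algebraMap K L (w j) with hwL
  set f : Polynomial L := (minpoly K M).map (algebraMap K L) with hfdef
  -- basic facts about `f`
  have hMint : IsIntegral K M := IsIntegral.of_finite K M
  have hmono : (minpoly K M).Monic := minpoly.monic hMint
  have hfmonic : f.Monic := hmono.map _
  have hfnd : f.natDegree ≤ n := by
    have h1 : (minpoly K M).natDegree ≤ n := by
      have := Polynomial.natDegree_le_of_dvd (Matrix.minpoly_dvd_charpoly M)
        (Matrix.charpoly_monic M).ne_zero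
      simpa [Matrix.charpoly_natDegree_eq_dim] using this
    simpa [hfdef, hmono.natDegree_map] using h1
  have haf : Polynomial.aeval A f = 0 := by
    have h1 : Polynomial.aeval A f = Polynomial.aeval (R := K) A (minpoly K M) := by
      rw [hfdef]; exact Polynomial.aeval_map_algebraMap L A (minpoly K M)
    have h2 : A = (Algebra.ofId K L).mapMatrix M := by
      rw [hA]; rfl
    rw [h1, h2, Polynomial.aeval_algHom_apply, minpoly.aeval, map_zero]
  -- spans over L
  have hvLspan : Submodule.span L (Set.range fun i : Fin n => (A ^ (i:ℕ)).mulVec vL) = ⊤ :=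
    span_map_top M v hv
  have hwLspan : Submodule.span L (Set.range fun i : Fin n => (Aᵀ ^ (i:ℕ)).mulVec wL) = ⊤ := by
    have := span_map_top (L := L) Mᵀ w hw
    have ht : Mᵀ.map (algebraMap K L) = Aᵀ := by rw [hA, Matrix.transpose_map]
    rwa [ht] at this
  -- Part 1: stability of the dual under right multiplication by M
  have part1 : ∀ c' : Fin n → L, (∀ c ∈ S, c' ⬝ᵥ c = 0) →
      ∀ c ∈ S, (Matrix.vecMul c' A) ⬝ᵥ c = 0 := by
    intro c' hc' c hc
    rw [hS] at hc
    obtain ⟨P, rfl⟩ := hc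
    rw [← Matrix.dotProduct_mulVec, Matrix.mulVec_mulVec]
    have : A * Polynomial.aeval A (g * P) = Polynomial.aeval A (g * (X * P)) := by
      have hcomm : A * Polynomial.aeval A g = Polynomial.aeval A g * A := by
        calc A * Polynomial.aeval A g = Polynomial.aeval A (X * g) := by
              rw [_root_.map_mul, Polynomial.aeval_X]
          _ = Polynomial.aeval A (g * X) := by rw [mul_comm]
          _ = Polynomial.aeval A g * A := by rw [_root_.map_mul, Polynomial.aeval_X]
      rw [_root_.map_mul, _root_.map_mul, _root_.map_mul, Polynomial.aeval_X,
        ← mul_assoc, hcomm, mul_assoc]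
    rw [this]
    exact hc' _ (by rw [hS]; exact ⟨X * P, rfl⟩)
  refine ⟨part1, ?_⟩
  ext c'
  simp only [Set.mem_setOf_eq]
  constructor
  · -- dual ⊆ Mᵀ-cyclic code generated by h
    intro hc'
    obtain ⟨Q, hQ⟩ := exists_poly Aᵀ wL hwLspan c'
    set u : Fin n → L := (Polynomial.aeval A (Q * g)).mulVec vL with hu
    have hu0 : u = 0 := by
      apply eq_zero_of_dot u _ hwLspan
      rintro x ⟨i, rfl⟩
      have hx : (Aᵀ ^ (i:ℕ)).mulVec wL = (Polynomial.aeval Aᵀ ((X : Polynomial L) ^ (i:ℕ))).mulVec wL := by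
        rw [map_pow, Polynomial.aeval_X]
      show (Aᵀ ^ (i:ℕ)).mulVec wL ⬝ᵥ u = 0
      rw [hx, hu, key_dot]
      have hcc := hc' ((Polynomial.aeval A (g * (X ^ (i:ℕ)))).mulVec vL)
        (by rw [hS]; exact ⟨(X : Polynomial L) ^ (i:ℕ), rfl⟩)
      rw [hQ, key_dot] at hcc
      have : (X : Polynomial L) ^ (i:ℕ) * (Q * g) = Q * (g * (X : Polynomial L) ^ (i:ℕ)) := by ring
      rw [this]
      exact hcc
    have hdvd : f ∣ Q * g := ann_dvd A vL hvLspan f hfmonic hfnd haf _ hu0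
    obtain ⟨t, ht⟩ := hdvd
    have hQht : Q = h * t := by
      have hg0 : g ≠ 0 := hgmonic.ne_zero
      apply mul_right_cancel₀ hg0
      rw [ht, hf]; ring
    exact ⟨t, by rw [hQ, hQht]⟩
  · -- Mᵀ-cyclic code generated by h ⊆ dual
    rintro ⟨P, rfl⟩ c hc
    rw [hS] at hc
    obtain ⟨P', rfl⟩ := hc
    rw [key_dot]
    have : h * P * (g * P') = f * (P * P') := by rw [hf]; ring
    rw [this, _root_.map_mul, haf, zero_mul, Matrix.zero_mulVec, dotProduct_zero]
end

section
/- Let L/K be a finite field extension and let C ⊆ L^n be an L-linear code of dimension k. Then the last generalized rank weight satisfies M_k(C) = n − dim_K(C^⊥ ∩ K^n), where C^⊥ is the dual with respect to the standard bilinear form on L^n. -/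
open Polynomial Matrix

/-- The last generalized rank weight of a linear code `C ⊆ L^n` of dimension `k`
satisfies `M_k(C) = n − dim_K (C^⊥ ∩ K^n)`.  Here `M_k(C) = wt_R(C)` is the
`K`-dimension of the rank support of `C`, described basis-freely as the `K`-span of
the vectors `(φ(c₁),…,φ(c_n))` for `φ : L →ₗ[K] K` and `c ∈ C`, while
`C^⊥ ∩ K^n ⊆ K^n` consists of the `K`-rational vectors orthogonal to `C`. -/
theorem stmt17 {K L : Type*} [Field K] [Field L] [Algebra K L] [FiniteDimensional K L]
    {n k : ℕ} (C : Submodule L (Fin n → L)) (hk : Module.finrank L C = k) :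
    Module.finrank K
      (Submodule.span K {w : Fin n → K | ∃ φ : L →ₗ[K] K, ∃ c ∈ C, w = fun j => φ (c j)})
      = n - Module.finrank K
        (Submodule.span K {w : Fin n → K |
          ∀ c ∈ C, (fun j => algebraMap K L (w j)) ⬝ᵥ c = 0}) := by
  classical
  set B : LinearMap.BilinForm K (Fin n → K) :=
    LinearMap.mk₂ K (· ⬝ᵥ ·)
      (fun x y z => add_dotProduct x y z)
      (fun a x y => smul_dotProduct a x y)
      (fun x y z => dotProduct_add x y z)
      (fun a x y => dotProduct_smul a x y) with hB
  have hBapp : ∀ x y : Fin n → K, B x y = x ⬝ᵥ y := fun x y => rfl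
  have hSymm : B.IsSymm := LinearMap.BilinForm.isSymm_def.mpr fun x y => by simp [hBapp, dotProduct_comm]
  have hRefl : B.IsRefl := hSymm.isRefl
  have hNd : B.Nondegenerate := by
    refine (LinearMap.IsRefl.nondegenerate_iff_separatingLeft hRefl).mpr ?_
    intro v hv
    funext i
    have := hv (Pi.single i 1)
    simpa [hBapp] using this
  set S : Submodule K (Fin n → K) :=
    Submodule.span K {w : Fin n → K | ∃ φ : L →ₗ[K] K, ∃ c ∈ C, w = fun j => φ (c j)} with hS
  have key : ∀ (w : Fin n → K) (c : Fin n → L) (φ : L →ₗ[K] K),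
      (fun j => φ (c j)) ⬝ᵥ w = φ ((fun j => algebraMap K L (w j)) ⬝ᵥ c) := by
    intro w c φ
    simp only [dotProduct, map_sum]
    congr 1; funext j
    rw [← Algebra.smul_def, LinearMap.map_smul, smul_eq_mul, mul_comm]
  have hset : {w : Fin n → K | ∀ c ∈ C, (fun j => algebraMap K L (w j)) ⬝ᵥ c = 0}
      = (B.orthogonal S : Set (Fin n → K)) := by
    ext w
    simp only [Set.mem_setOf_eq, SetLike.mem_coe]
    constructor
    · intro hw
      intro s hs
      induction hs using Submodule.span_induction with
      | mem x hx =>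
        obtain ⟨φ, c, hc, rfl⟩ := hx
        show B _ w = 0
        rw [hBapp, key w c φ, hw c hc, map_zero]
      | zero => exact LinearMap.isOrtho_zero_left B w
      | add x y _ _ hx hy =>
        show B (x + y) w = 0
        rw [map_add, LinearMap.add_apply, hx, hy, add_zero]
      | smul a x _ hx =>
        show B (a • x) w = 0
        rw [LinearMap.map_smul, LinearMap.smul_apply, hx, smul_zero]
    · intro hw c hc
      rw [← Module.forall_dual_apply_eq_zero_iff K]
      intro φ
      have hg : (fun j => φ (c j)) ∈ S :=
        Submodule.subset_span ⟨φ, c, hc, rfl⟩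
      have h0 : (fun j => φ (c j)) ⬝ᵥ w = 0 := hw _ hg
      rw [key w c φ] at h0
      exact h0
  rw [show Submodule.span K {w : Fin n → K |
        ∀ c ∈ C, (fun j => algebraMap K L (w j)) ⬝ᵥ c = 0} = B.orthogonal S by
      rw [hset, Submodule.span_eq],
    LinearMap.BilinForm.finrank_orthogonal hNd S]
  have h1 : Module.finrank K (Fin n → K) = n := by simp
  have h2 := S.finrank_le
  rw [h1] at h2
  omega
end

section
/- Let L/K be a field extension and M ∈ M_n(K) a cyclic matrix with square-free minimal polynomial f = f₁⋯f_s, the f_i pairwise distinct monic irreducible over K. Let g ∈ L[x] be a monic divisor of f and I = {i : gcd(g, f_i) ≠ 1 in L[x]}. Then g·L[x] ∩ K[x] = (∏_{i∈I} f_i)·K[x]. -/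
open Polynomial Matrix

/-- If `M` is a cyclic matrix with square-free minimal polynomial `f = f₁⋯f_s`,
`g ∈ L[x]` a monic divisor of `f`, and `I = {i : gcd(g,fᵢ) ≠ 1}` in `L[x]`, then
`g·L[x] ∩ K[x] = (∏_{i∈I} fᵢ)·K[x]`. -/
theorem stmt18 {K L : Type*} [Field K] [Field L] [Algebra K L] {n s : ℕ}
    (M : Matrix (Fin n) (Fin n) K)
    (hcyc : ∃ v : Fin n → K,
      Submodule.span K (Set.range fun i : Fin n => (M ^ (i : ℕ)).mulVec v) = ⊤)
    (f : Fin s → Polynomial K)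
    (hmonic : ∀ i, (f i).Monic) (hirr : ∀ i, Irreducible (f i))
    (hdist : Function.Injective f)
    (hmin : minpoly K M = ∏ i, f i)
    (g : Polynomial L) (hgmonic : g.Monic)
    (hgdvd : g ∣ (minpoly K M).map (algebraMap K L))
    (I : Finset (Fin s))
    (hI : ∀ i, i ∈ I ↔ ¬ IsCoprime g ((f i).map (algebraMap K L))) :
    ∀ p : Polynomial K,
      g ∣ p.map (algebraMap K L) ↔ (∏ i ∈ I, f i) ∣ p := by
  classical
  intro p
  set F : Fin s → Polynomial L := fun i => (f i).map (algebraMap K L) with hF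
  have hcop : ∀ i j, i ≠ j → IsCoprime (f i) (f j) := by
    intro i j hij
    rw [(hirr i).coprime_iff_not_dvd]
    intro hdvd
    exact hij (hdist (Polynomial.eq_of_monic_of_associated (hmonic i) (hmonic j)
      ((hirr i).associated_of_dvd (hirr j) hdvd)))
  constructor
  · -- forward
    intro hgp
    refine Finset.prod_dvd_of_coprime (fun i _ j _ hij => hcop i j hij) ?_
    intro i hiI
    have hne := (hI i).mp hiI
    have hd1 : EuclideanDomain.gcd g (F i) ∣ g := EuclideanDomain.gcd_dvd_left _ _
    have hd2 : EuclideanDomain.gcd g (F i) ∣ F i := EuclideanDomain.gcd_dvd_right _ _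
    have hnu : ¬ IsUnit (EuclideanDomain.gcd g (F i)) := fun h =>
      hne (EuclideanDomain.gcd_isUnit_iff.mp h)
    have hdvdgcd : EuclideanDomain.gcd g (F i) ∣
        (EuclideanDomain.gcd (f i) p).map (algebraMap K L) := by
      rw [← Polynomial.gcd_map]
      exact EuclideanDomain.dvd_gcd hd2 (hd1.trans hgp)
    by_contra hndvd
    have hcoprime : IsCoprime (f i) p := ((hirr i).coprime_iff_not_dvd).mpr hndvd
    have hu : IsUnit ((EuclideanDomain.gcd (f i) p).map (algebraMap K L)) :=
      (EuclideanDomain.gcd_isUnit_iff.mpr hcoprime).map (Polynomial.mapRingHom (algebraMap K L))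
    exact hnu (isUnit_of_dvd_unit hdvdgcd hu)
  · -- backward
    intro hp
    have h1 : g ∣ (∏ i ∈ I, F i) * (∏ i ∈ Iᶜ, F i) := by
      rw [Finset.prod_mul_prod_compl]
      have : (minpoly K M).map (algebraMap K L) = ∏ i, F i := by
        rw [hmin, Polynomial.map_prod]
      rwa [this] at hgdvd
    have h2 : IsCoprime g (∏ i ∈ Iᶜ, F i) := by
      refine IsCoprime.prod_right fun i hi => ?_
      by_contra hc
      exact (Finset.mem_compl.mp hi) ((hI i).mpr hc)
    have h3 : g ∣ ∏ i ∈ I, F i := h2.dvd_of_dvd_mul_right h1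
    refine h3.trans ?_
    have : (∏ i ∈ I, f i).map (algebraMap K L) ∣ p.map (algebraMap K L) :=
      Polynomial.map_dvd _ hp
    rwa [Polynomial.map_prod] at this
end
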